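/- Let 0 ≤ α < n and let Φ, Ψ be Young functions such that the fractional maximal operator M_α is bounded from L_Φ(ℝⁿ) to WL_Ψ(ℝⁿ), i.e. there is A > 0 with ‖M_α g‖_{WL_Ψ(ℝⁿ)} ≤ A‖g‖_{L_Φ(ℝⁿ)} for all g (by Cianchi's theorem this is equivalent to Φ dominating globally the Young function Q with Q⁻¹(r) = r^{α/n}Ψ⁻¹(r)). Then there exists C > 0, independent of x, r and f, such that for every ball B = B(x,r) and every locally integrable f: ‖M_α f‖_{WL_Ψ(B(x,r))} ≤ C ( ‖f‖_{L_Φ(B(x,2r))} + Ψ⁻¹(r⁻ⁿ)⁻¹ · sup_{t>2r} t^{α−n} ∫_{B(x,t)} |f(z)| dz ). -/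

import Mathlib

open MeasureTheory Metric Set NNReal ENNReal Filter

noncomputable section

/-- A Young function: a convex, left-continuous `Φ : [0,∞) → [0,∞]` with `Φ(0) = 0`
and `Φ(r) → ∞` as `r → ∞`. -/
structure YoungFunction where
  toFun : ℝ≥0 → ℝ≥0∞
  map_zero' : toFun 0 = 0
  convex' : ∀ (s t a b : ℝ≥0), a + b = 1 →
    toFun (a * s + b * t) ≤ (a : ℝ≥0∞) * toFun s + (b : ℝ≥0∞) * toFun t
  left_continuous' : ∀ s : ℝ≥0, 0 < s → toFun s = ⨆ (t : ℝ≥0) (_ : t < s), toFun t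
  tendsto_top' : Tendsto toFun atTop (nhds (⊤ : ℝ≥0∞))

namespace YoungFunction

/-- The generalized inverse `Φ⁻¹(s) = inf {r ≥ 0 : Φ(r) > s}` (with `inf ∅ = ∞`). -/
def inv (Φ : YoungFunction) (s : ℝ≥0∞) : ℝ≥0∞ :=
  sInf ((fun r : ℝ≥0 => (r : ℝ≥0∞)) '' {r : ℝ≥0 | s < Φ.toFun r})

/-- The canonical extension of `Φ` to `[0,∞]`. -/
def ext (Φ : YoungFunction) (s : ℝ≥0∞) : ℝ≥0∞ :=
  if s = ⊤ then ⊤ else Φ.toFun s.toNNReal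

/-- `Φ` is of lower type `p`: `Φ(st) ≤ C t^p Φ(s)` for all `t ∈ [0,1]`, `s ≥ 0`. -/
def IsLowerType (Φ : YoungFunction) (p : ℝ) : Prop :=
  ∃ C : ℝ, 0 < C ∧ ∀ (s t : ℝ≥0), t ≤ 1 →
    Φ.toFun (s * t) ≤ ENNReal.ofReal C * (t : ℝ≥0∞) ^ p * Φ.toFun s

/-- `Φ` is of upper type `p`: `Φ(st) ≤ C t^p Φ(s)` for all `t ≥ 1`, `s ≥ 0`. -/
def IsUpperType (Φ : YoungFunction) (p : ℝ) : Prop :=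
  ∃ C : ℝ, 0 < C ∧ ∀ (s t : ℝ≥0), 1 ≤ t →
    Φ.toFun (s * t) ≤ ENNReal.ofReal C * (t : ℝ≥0∞) ^ p * Φ.toFun s

end YoungFunction

variable {X : Type*} [MeasurableSpace X]

/-- The Luxemburg norm `‖g‖_{L_Φ(E)}` of an `[0,∞]`-valued function `g` on a set `E`. -/
def luxNormE (Φ : YoungFunction) (μ : Measure X) (E : Set X) (g : X → ℝ≥0∞) : ℝ≥0∞ :=
  sInf {lam : ℝ≥0∞ | 0 < lam ∧ ∫⁻ x in E, Φ.ext (g x / lam) ∂μ ≤ 1}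

/-- The Luxemburg norm `‖f‖_{L_Φ(E)}` of a real-valued function `f` on a set `E`. -/
def luxNorm (Φ : YoungFunction) (μ : Measure X) (E : Set X) (f : X → ℝ) : ℝ≥0∞ :=
  luxNormE Φ μ E fun x => (‖f x‖₊ : ℝ≥0∞)

/-- The weak Luxemburg norm `‖g‖_{WL_Φ(E)}`. -/
def wLuxNormE (Φ : YoungFunction) (μ : Measure X) (E : Set X) (g : X → ℝ≥0∞) : ℝ≥0∞ :=
  sInf {lam : ℝ≥0∞ | 0 < lam ∧
    ∀ t : ℝ≥0, 0 < t → Φ.toFun t * μ {x | x ∈ E ∧ (t : ℝ≥0∞) < g x / lam} ≤ 1}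

/-- The weak Luxemburg norm of a real-valued function. -/
def wLuxNorm (Φ : YoungFunction) (μ : Measure X) (E : Set X) (f : X → ℝ) : ℝ≥0∞ :=
  wLuxNormE Φ μ E fun x => (‖f x‖₊ : ℝ≥0∞)

/-- Euclidean space `ℝⁿ` with Lebesgue measure. -/
abbrev En (n : ℕ) := EuclideanSpace ℝ (Fin n)

/-- The fractional maximal operator
`M_α f(x) = sup_{t>0} |B(x,t)|^{α/n - 1} ∫_{B(x,t)} |f(y)| dy`. -/
def fracMaximal (n : ℕ) (α : ℝ) (f : En n → ℝ) (x : En n) : ℝ≥0∞ :=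
  ⨆ (t : ℝ) (_ : 0 < t),
    volume (ball x t) ^ (α / (n : ℝ) - 1) * ∫⁻ y in ball x t, (‖f y‖₊ : ℝ≥0∞)

/-- The commutator of the fractional maximal operator
`M_{b,α} f(x) = sup_{t>0} |B(x,t)|^{α/n - 1} ∫_{B(x,t)} |b(x)-b(y)||f(y)| dy`. -/
def commFracMaximal (n : ℕ) (α : ℝ) (b f : En n → ℝ) (x : En n) : ℝ≥0∞ :=
  ⨆ (t : ℝ) (_ : 0 < t),
    volume (ball x t) ^ (α / (n : ℝ) - 1) *
      ∫⁻ y in ball x t, (‖b x - b y‖₊ : ℝ≥0∞) * (‖f y‖₊ : ℝ≥0∞)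

/-- The Hardy–Littlewood maximal operator. -/
def hlMaximal (n : ℕ) (f : En n → ℝ) (x : En n) : ℝ≥0∞ :=
  ⨆ (t : ℝ) (_ : 0 < t),
    (volume (ball x t))⁻¹ * ∫⁻ y in ball x t, (‖f y‖₊ : ℝ≥0∞)

/-- The commutator of the Hardy–Littlewood maximal operator. -/
def commMaximal (n : ℕ) (b f : En n → ℝ) (x : En n) : ℝ≥0∞ :=
  ⨆ (t : ℝ) (_ : 0 < t),
    (volume (ball x t))⁻¹ * ∫⁻ y in ball x t, (‖b x - b y‖₊ : ℝ≥0∞) * (‖f y‖₊ : ℝ≥0∞)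

/-- The generalized Orlicz–Morrey norm `‖g‖_{M_{Φ,φ}}` (for `[0,∞]`-valued functions). -/
def morreyNormE (n : ℕ) (Φ : YoungFunction) (φ : En n → ℝ → ℝ) (g : En n → ℝ≥0∞) : ℝ≥0∞ :=
  ⨆ (x : En n) (r : ℝ) (_ : 0 < r),
    (ENNReal.ofReal (φ x r))⁻¹ * Φ.inv (ENNReal.ofReal r ^ (-(n : ℝ))) *
      luxNormE Φ volume (ball x r) g

/-- The generalized Orlicz–Morrey norm of a real-valued function. -/
def morreyNorm (n : ℕ) (Φ : YoungFunction) (φ : En n → ℝ → ℝ) (f : En n → ℝ) : ℝ≥0∞ :=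
  morreyNormE n Φ φ fun x => (‖f x‖₊ : ℝ≥0∞)

/-- The weak generalized Orlicz–Morrey norm `‖g‖_{WM_{Φ,φ}}`. -/
def wMorreyNormE (n : ℕ) (Φ : YoungFunction) (φ : En n → ℝ → ℝ) (g : En n → ℝ≥0∞) : ℝ≥0∞ :=
  ⨆ (x : En n) (r : ℝ) (_ : 0 < r),
    (ENNReal.ofReal (φ x r))⁻¹ * Φ.inv (ENNReal.ofReal r ^ (-(n : ℝ))) *
      wLuxNormE Φ volume (ball x r) g

/-- The Orlicz–Morrey norm `‖g‖_{M_{Φ,λ}}` with exponent `λ`. -/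
def morreyLamNormE (n : ℕ) (Φ : YoungFunction) (lam : ℝ) (g : En n → ℝ≥0∞) : ℝ≥0∞ :=
  ⨆ (x : En n) (r : ℝ) (_ : 0 < r),
    Φ.inv (ENNReal.ofReal r ^ (-lam)) * luxNormE Φ volume (ball x r) g

/-- The Orlicz–Morrey norm with exponent `λ` of a real-valued function. -/
def morreyLamNorm (n : ℕ) (Φ : YoungFunction) (lam : ℝ) (f : En n → ℝ) : ℝ≥0∞ :=
  morreyLamNormE n Φ lam fun x => (‖f x‖₊ : ℝ≥0∞)

/-- The average `f_{B(x,r)}` of `f` over the ball `B(x,r)`. -/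
def ballAvg (n : ℕ) (b : En n → ℝ) (x : En n) (r : ℝ) : ℝ :=
  ⨍ y in ball x r, b y

/-- The BMO seminorm `‖b‖_*`. -/
def bmoSeminorm (n : ℕ) (b : En n → ℝ) : ℝ≥0∞ :=
  ⨆ (x : En n) (r : ℝ) (_ : 0 < r),
    ENNReal.ofReal (⨍ y in ball x r, |b y - ballAvg n b x r|)
section AuxLemmas

namespace YoungFunction

theorem toFun_scale (Φ : YoungFunction) {k : ℝ≥0} (hk : 1 ≤ k) (t : ℝ≥0) :
    (k : ℝ≥0∞) * Φ.toFun t ≤ Φ.toFun (k * t) := by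
  have hk0 : k ≠ 0 := (zero_lt_one.trans_le hk).ne'
  have hkinv : k⁻¹ ≤ 1 := by
    rw [inv_le_one₀ (zero_lt_one.trans_le hk)]; exact hk
  have h1 : k⁻¹ + (1 - k⁻¹) = 1 := by
    rw [add_tsub_cancel_of_le hkinv]
  have key := Φ.convex' (k * t) 0 k⁻¹ (1 - k⁻¹) h1
  rw [mul_zero, add_zero, ← mul_assoc, inv_mul_cancel₀ hk0, one_mul, Φ.map_zero', mul_zero,
    add_zero] at key
  calc (k : ℝ≥0∞) * Φ.toFun t ≤ (k : ℝ≥0∞) * ((k⁻¹ : ℝ≥0) * Φ.toFun (k * t)) :=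
        mul_le_mul_right key _
    _ = Φ.toFun (k * t) := by
        rw [← mul_assoc, ← ENNReal.coe_mul, mul_inv_cancel₀ hk0, ENNReal.coe_one, one_mul]

theorem double (Ψ : YoungFunction) (t : ℝ≥0) : Ψ.toFun t ≤ 2⁻¹ * Ψ.toFun (2 * t) := by
  have h := Ψ.toFun_scale (k := 2) one_le_two t
  have h2 : ((2 : ℝ≥0) : ℝ≥0∞) = 2 := by norm_num
  rw [h2] at h
  calc Ψ.toFun t = 2⁻¹ * (2 * Ψ.toFun t) := by
        rw [← mul_assoc, ENNReal.inv_mul_cancel two_ne_zero ENNReal.ofNat_ne_top, one_mul]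
    _ ≤ 2⁻¹ * Ψ.toFun (2 * t) := mul_le_mul_right h _

theorem inv_mono (Φ : YoungFunction) : Monotone Φ.inv := by
  intro s s' h
  exact sInf_le_sInf (Set.image_mono fun r hr => h.trans_lt hr)

theorem inv_scale (Φ : YoungFunction) {k : ℝ≥0} (hk : 1 ≤ k) (s : ℝ≥0∞) :
    Φ.inv ((k : ℝ≥0∞) * s) ≤ (k : ℝ≥0∞) * Φ.inv s := by
  have hk0 : k ≠ 0 := (zero_lt_one.trans_le hk).ne'
  have hk0' : (k : ℝ≥0∞) ≠ 0 := by exact_mod_cast hk0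
  have hkt : (k : ℝ≥0∞) ≠ ⊤ := ENNReal.coe_ne_top
  rw [mul_comm ((k : ℝ≥0∞)) (Φ.inv s), ← ENNReal.div_le_iff hk0' hkt]
  refine le_sInf ?_
  rintro b ⟨u, hu, rfl⟩
  rw [ENNReal.div_le_iff hk0' hkt]
  refine sInf_le ⟨k * u, ?_, by push_cast; ring⟩
  calc (k : ℝ≥0∞) * s < (k : ℝ≥0∞) * Φ.toFun u := by
        exact (ENNReal.mul_lt_mul_iff_right hk0' hkt).2 hu
    _ ≤ Φ.toFun (k * u) := Φ.toFun_scale hk u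

end YoungFunction

theorem wLuxNormE_mono_fun (Ψ : YoungFunction) (μ : Measure X) {E : Set X}
    {g h : X → ℝ≥0∞} (hgh : ∀ x ∈ E, g x ≤ h x) :
    wLuxNormE Ψ μ E g ≤ wLuxNormE Ψ μ E h := by
  apply sInf_le_sInf
  rintro lam ⟨hl, hlam⟩
  refine ⟨hl, fun t ht => ?_⟩
  refine le_trans (mul_le_mul_right (measure_mono ?_) _) (hlam t ht)
  rintro x ⟨hxE, hx⟩
  exact ⟨hxE, hx.trans_le (ENNReal.div_le_div_right (hgh x hxE) _)⟩

theorem wLuxNormE_mono_set (Ψ : YoungFunction) (μ : Measure X) {E E' : Set X}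
    (hE : E ⊆ E') (g : X → ℝ≥0∞) :
    wLuxNormE Ψ μ E g ≤ wLuxNormE Ψ μ E' g := by
  apply sInf_le_sInf
  rintro lam ⟨hl, hlam⟩
  refine ⟨hl, fun t ht => ?_⟩
  refine le_trans (mul_le_mul_right (measure_mono ?_) _) (hlam t ht)
  rintro x ⟨hxE, hx⟩
  exact ⟨hE hxE, hx⟩

theorem wLuxNormE_add_le (Ψ : YoungFunction) (μ : Measure X) (E : Set X)
    (g₁ g₂ : X → ℝ≥0∞) :
    wLuxNormE Ψ μ E (fun x => g₁ x + g₂ x) ≤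
      2 * wLuxNormE Ψ μ E g₁ + 2 * wLuxNormE Ψ μ E g₂ := by
  set S₁ := {lam : ℝ≥0∞ | 0 < lam ∧
    ∀ t : ℝ≥0, 0 < t → Ψ.toFun t * μ {x | x ∈ E ∧ (t : ℝ≥0∞) < g₁ x / lam} ≤ 1} with hS₁
  set S₂ := {lam : ℝ≥0∞ | 0 < lam ∧
    ∀ t : ℝ≥0, 0 < t → Ψ.toFun t * μ {x | x ∈ E ∧ (t : ℝ≥0∞) < g₂ x / lam} ≤ 1} with hS₂
  have key : ∀ a ∈ S₁, ∀ b ∈ S₂,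
      wLuxNormE Ψ μ E (fun x => g₁ x + g₂ x) ≤ 2 * a + 2 * b := by
    intro a ha b hb
    by_cases hab : 2 * a + 2 * b = ⊤
    · exact hab ▸ le_top
    have hat : a ≠ ⊤ := by
      intro h; apply hab; rw [h]; simp [ENNReal.mul_top]
    have hbt : b ≠ ⊤ := by
      intro h; apply hab; rw [h]; simp [ENNReal.mul_top]
    apply sInf_le
    constructor
    · calc (0 : ℝ≥0∞) < a := ha.1
        _ ≤ 2 * a := le_mul_of_one_le_left' one_le_two
        _ ≤ 2 * a + 2 * b := le_self_add
    intro t ht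
    set A₁ := {x | x ∈ E ∧ ((2 * t : ℝ≥0) : ℝ≥0∞) < g₁ x / a} with hA₁
    set A₂ := {x | x ∈ E ∧ ((2 * t : ℝ≥0) : ℝ≥0∞) < g₂ x / b} with hA₂
    have hsub : {x | x ∈ E ∧ (t : ℝ≥0∞) < (g₁ x + g₂ x) / (2 * a + 2 * b)} ⊆ A₁ ∪ A₂ := by
      rintro x ⟨hxE, hx⟩
      by_contra hc
      rw [Set.mem_union, not_or] at hc
      obtain ⟨hc₁, hc₂⟩ := hc
      have h1 : g₁ x ≤ ((2 * t : ℝ≥0) : ℝ≥0∞) * a := by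
        have : ¬ ((2 * t : ℝ≥0) : ℝ≥0∞) < g₁ x / a := fun h => hc₁ ⟨hxE, h⟩
        rw [not_lt] at this
        exact (ENNReal.div_le_iff ha.1.ne' hat).1 this
      have h2 : g₂ x ≤ ((2 * t : ℝ≥0) : ℝ≥0∞) * b := by
        have : ¬ ((2 * t : ℝ≥0) : ℝ≥0∞) < g₂ x / b := fun h => hc₂ ⟨hxE, h⟩
        rw [not_lt] at this
        exact (ENNReal.div_le_iff hb.1.ne' hbt).1 this
      have hlt : (t : ℝ≥0∞) * (2 * a + 2 * b) < g₁ x + g₂ x := by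
        have h0 : (2 * a + 2 * b) ≠ 0 := by
          intro h
          have := ha.1
          simp only [add_eq_zero, mul_eq_zero] at h
          rcases h.1 with h' | h'
          · norm_num at h'
          · exact absurd h' ha.1.ne'
        exact (ENNReal.lt_div_iff_mul_lt (Or.inl h0) (Or.inl hab)).1 hx
      have : g₁ x + g₂ x ≤ (t : ℝ≥0∞) * (2 * a + 2 * b) := by
        calc g₁ x + g₂ x ≤ ((2 * t : ℝ≥0) : ℝ≥0∞) * a + ((2 * t : ℝ≥0) : ℝ≥0∞) * b :=
              add_le_add h1 h2
          _ = (t : ℝ≥0∞) * (2 * a + 2 * b) := by push_cast; ring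
      exact absurd hlt (not_lt.2 this)
    have h2t : (0 : ℝ≥0) < 2 * t := by positivity
    calc Ψ.toFun t * μ {x | x ∈ E ∧ (t : ℝ≥0∞) < (g₁ x + g₂ x) / (2 * a + 2 * b)}
        ≤ Ψ.toFun t * (μ A₁ + μ A₂) :=
          mul_le_mul_right ((measure_mono hsub).trans (measure_union_le _ _)) _
      _ = Ψ.toFun t * μ A₁ + Ψ.toFun t * μ A₂ := mul_add _ _ _
      _ ≤ 2⁻¹ * Ψ.toFun (2 * t) * μ A₁ + 2⁻¹ * Ψ.toFun (2 * t) * μ A₂ := by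
          gcongr <;> exact Ψ.double t
      _ = 2⁻¹ * (Ψ.toFun (2 * t) * μ A₁) + 2⁻¹ * (Ψ.toFun (2 * t) * μ A₂) := by ring
      _ ≤ 2⁻¹ * 1 + 2⁻¹ * 1 := by
          gcongr
          · exact ha.2 (2 * t) h2t
          · exact hb.2 (2 * t) h2t
      _ = 1 := by
          rw [mul_one]; exact ENNReal.inv_two_add_inv_two
  by_cases h1 : sInf S₁ = ⊤
  · rw [show wLuxNormE Ψ μ E g₁ = sInf S₁ from rfl, h1]
    simp [ENNReal.mul_top]
  by_cases h2 : sInf S₂ = ⊤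
  · rw [show wLuxNormE Ψ μ E g₂ = sInf S₂ from rfl, h2]
    simp [ENNReal.mul_top]
  rw [show wLuxNormE Ψ μ E g₁ = sInf S₁ from rfl, show wLuxNormE Ψ μ E g₂ = sInf S₂ from rfl]
  refine ENNReal.le_of_forall_pos_le_add fun ε hε _ => ?_
  have hδ : ((ε / 4 : ℝ≥0) : ℝ≥0∞) ≠ 0 := by
    simp only [ne_eq, ENNReal.coe_eq_zero]
    positivity
  obtain ⟨a, haS, ha⟩ := sInf_lt_iff.1 (ENNReal.lt_add_right h1 hδ)
  obtain ⟨b, hbS, hb⟩ := sInf_lt_iff.1 (ENNReal.lt_add_right h2 hδ)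
  calc wLuxNormE Ψ μ E (fun x => g₁ x + g₂ x) ≤ 2 * a + 2 * b := key a haS b hbS
    _ ≤ 2 * (sInf S₁ + ((ε / 4 : ℝ≥0) : ℝ≥0∞)) + 2 * (sInf S₂ + ((ε / 4 : ℝ≥0) : ℝ≥0∞)) := by
        gcongr
    _ = 2 * sInf S₁ + 2 * sInf S₂ + (2 * ((ε / 4 : ℝ≥0) : ℝ≥0∞) + 2 * ((ε / 4 : ℝ≥0) : ℝ≥0∞)) := by
        ring
    _ = 2 * sInf S₁ + 2 * sInf S₂ + ε := by
        congr 1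
        have : (2 : ℝ≥0∞) * ((ε / 4 : ℝ≥0) : ℝ≥0∞) + 2 * ((ε / 4 : ℝ≥0) : ℝ≥0∞)
            = ((2 * (ε / 4) + 2 * (ε / 4) : ℝ≥0) : ℝ≥0∞) := by push_cast; ring
        rw [this]
        congr 1
        field_simp
        ring

theorem wLuxNormE_const_le (Ψ : YoungFunction) (μ : Measure X) (B : Set X)
    (hB0 : μ B ≠ 0) (hBt : μ B ≠ ⊤) (c : ℝ≥0∞) :
    wLuxNormE Ψ μ B (fun _ => c) ≤ c * (Ψ.inv ((μ B)⁻¹))⁻¹ := by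
  set I := Ψ.inv ((μ B)⁻¹) with hI
  have hI_le : ∀ t : ℝ≥0, (t : ℝ≥0∞) < I → Ψ.toFun t ≤ (μ B)⁻¹ := by
    intro t ht
    by_contra h
    push_neg at h
    exact absurd (sInf_le ⟨t, h, rfl⟩ : I ≤ (t : ℝ≥0∞)) (not_le.2 ht)
  rcases eq_or_ne c 0 with rfl | hc0
  · refine le_trans ?_ zero_le
    refine ENNReal.le_of_forall_pos_le_add fun ε hε _ => ?_
    rw [zero_add]
    refine sInf_le ⟨by exact_mod_cast hε, fun t ht => ?_⟩
    have he : {x | x ∈ B ∧ (t : ℝ≥0∞) < (0 : ℝ≥0∞) / (ε : ℝ≥0∞)} = ∅ := by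
      ext x; simp [ENNReal.zero_div]
    rw [he]
    simp
  rcases eq_or_ne I ⊤ with hIt | hIt
  · refine le_trans ?_ zero_le
    refine ENNReal.le_of_forall_pos_le_add fun ε hε _ => ?_
    rw [zero_add]
    refine sInf_le ⟨by exact_mod_cast hε, fun t ht => ?_⟩
    calc Ψ.toFun t * μ {x | x ∈ B ∧ (t : ℝ≥0∞) < c / (ε : ℝ≥0∞)}
        ≤ (μ B)⁻¹ * μ B := by
          refine mul_le_mul' (hI_le t ?_) (measure_mono fun x hx => hx.1)
          rw [hIt]; exact ENNReal.coe_lt_top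
      _ = 1 := ENNReal.inv_mul_cancel hB0 hBt
  rcases eq_or_ne I 0 with hI0 | hI0
  · rw [hI0, ENNReal.inv_zero, ENNReal.mul_top hc0]
    exact le_top
  rcases eq_or_ne c ⊤ with rfl | hct
  · rw [ENNReal.top_mul (ENNReal.inv_ne_zero.2 hIt)]
    exact le_top
  apply sInf_le
  have hlam0 : c * I⁻¹ ≠ 0 := mul_ne_zero hc0 (ENNReal.inv_ne_zero.2 hIt)
  have hdiv : c / (c * I⁻¹) = I := by
    rw [div_eq_mul_inv, ENNReal.mul_inv (Or.inl hc0) (Or.inl hct), inv_inv, ← mul_assoc,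
      ENNReal.mul_inv_cancel hc0 hct, one_mul]
  refine ⟨pos_iff_ne_zero.2 hlam0, fun t ht => ?_⟩
  simp only [hdiv]
  by_cases htI : (t : ℝ≥0∞) < I
  · calc Ψ.toFun t * μ {x | x ∈ B ∧ (t : ℝ≥0∞) < I}
        ≤ (μ B)⁻¹ * μ B := mul_le_mul' (hI_le t htI) (measure_mono fun x hx => hx.1)
      _ = 1 := ENNReal.inv_mul_cancel hB0 hBt
  · have he : {x | x ∈ B ∧ (t : ℝ≥0∞) < I} = ∅ := by
      ext x; simp only [Set.mem_setOf_eq, Set.mem_empty_iff_false, iff_false, not_and]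
      exact fun _ => htI
    rw [he]
    simp

theorem luxNorm_indicator (Φ : YoungFunction) (μ : Measure X) {s : Set X}
    (hs : MeasurableSet s) (f : X → ℝ) :
    luxNorm Φ μ Set.univ (s.indicator f) = luxNorm Φ μ s f := by
  unfold luxNorm luxNormE
  congr 1
  ext lam
  have hint : ∫⁻ x in Set.univ, Φ.ext ((‖s.indicator f x‖₊ : ℝ≥0∞) / lam) ∂μ
      = ∫⁻ x in s, Φ.ext ((‖f x‖₊ : ℝ≥0∞) / lam) ∂μ := by
    rw [Measure.restrict_univ]
    have heq : (fun x => Φ.ext ((‖s.indicator f x‖₊ : ℝ≥0∞) / lam))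
        = s.indicator fun x => Φ.ext ((‖f x‖₊ : ℝ≥0∞) / lam) := by
      funext z
      by_cases hz : z ∈ s
      · simp [Set.indicator_of_mem hz]
      · simp [Set.indicator_of_notMem hz, YoungFunction.ext, ENNReal.zero_div, Φ.map_zero']
    rw [heq, lintegral_indicator hs]
  simp only [Set.mem_setOf_eq, hint]

end AuxLemmas
/-- If `M_α` is bounded from `L_Φ(ℝⁿ)` to `WL_Ψ(ℝⁿ)`, then the local weak
estimate `‖M_α f‖_{WL_Ψ(B(x,r))} ≲ ‖f‖_{L_Φ(B(x,2r))} + Ψ⁻¹(r⁻ⁿ)⁻¹ sup_{t>2r} t^{α-n} ∫_{B(x,t)}|f|`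
holds. -/
theorem fracMaximal_local_weak_estimate
    (n : ℕ) (α : ℝ) (hα0 : 0 ≤ α) (hαn : α < n) (Φ Ψ : YoungFunction)
    (A : ℝ) (hA : 0 < A)
    (hbdd : ∀ g : En n → ℝ,
      wLuxNormE Ψ volume Set.univ (fracMaximal n α g) ≤
        ENNReal.ofReal A * luxNorm Φ volume Set.univ g) :
    ∃ C : ℝ, 0 < C ∧ ∀ (x : En n) (r : ℝ), 0 < r → ∀ f : En n → ℝ,
      LocallyIntegrable f volume →
      wLuxNormE Ψ volume (ball x r) (fracMaximal n α f) ≤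
        ENNReal.ofReal C *
          (luxNorm Φ volume (ball x (2 * r)) f +
            (Ψ.inv (ENNReal.ofReal r ^ (-(n : ℝ))))⁻¹ *
              ⨆ (t : ℝ) (_ : 2 * r < t),
                ENNReal.ofReal t ^ (α - (n : ℝ)) *
                  ∫⁻ z in ball x t, (‖f z‖₊ : ℝ≥0∞)) := by
  have hnR : (0 : ℝ) < (n : ℝ) := lt_of_le_of_lt hα0 hαn
  have hn : 0 < n := by exact_mod_cast hnR
  have hnne : (n : ℝ) ≠ 0 := hnR.ne'
  set V := volume (ball (0 : En n) 1) with hV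
  have hV0 : V ≠ 0 := (measure_ball_pos _ _ one_pos).ne'
  have hVt : V ≠ ⊤ := measure_ball_lt_top.ne
  set e : ℝ := α / (n : ℝ) - 1 with he
  have hee : e < 0 := by
    rw [he, sub_neg]
    rw [div_lt_one hnR]
    exact hαn
  have hVe0 : V ^ e ≠ 0 := (ENNReal.rpow_pos (pos_iff_ne_zero.2 hV0) hVt).ne'
  have hVet : V ^ e ≠ ⊤ := by
    rw [show e = -(-e) by ring, ENNReal.rpow_neg]
    exact ENNReal.inv_ne_top.2 (ENNReal.rpow_pos (pos_iff_ne_zero.2 hV0) hVt).ne'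
  set K : ℝ≥0∞ := V ^ e * (2 : ℝ≥0∞) ^ ((n : ℝ) - α) with hK
  have hK0 : K ≠ 0 := mul_ne_zero hVe0
    (ENNReal.rpow_pos (by norm_num) ENNReal.ofNat_ne_top).ne'
  have hKt : K ≠ ⊤ := ENNReal.mul_ne_top hVet
    (ENNReal.rpow_ne_top_of_nonneg (by linarith) ENNReal.ofNat_ne_top)
  set D : ℝ≥0 := max V.toNNReal 1 with hD
  have hD1 : 1 ≤ D := le_max_right _ _
  have hD0' : (D : ℝ≥0∞) ≠ 0 := by
    exact_mod_cast (zero_lt_one.trans_le hD1).ne'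
  have hKDt : 2 * (K * (D : ℝ≥0∞)) ≠ ⊤ :=
    ENNReal.mul_ne_top ENNReal.ofNat_ne_top (ENNReal.mul_ne_top hKt ENNReal.coe_ne_top)
  set C : ℝ := 2 * A + (2 * (K * (D : ℝ≥0∞))).toReal + 1 with hC
  have hC0 : 0 < C := by
    have := ENNReal.toReal_nonneg (a := 2 * (K * (D : ℝ≥0∞)))
    rw [hC]; linarith
  refine ⟨C, hC0, ?_⟩
  intro x r hr f hf
  set B2 := ball x (2 * r) with hB2
  set f₁ := B2.indicator f with hf₁
  set f₂ := B2ᶜ.indicator f with hf₂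
  set S := ⨆ (t : ℝ) (_ : 2 * r < t),
      ENNReal.ofReal t ^ (α - (n : ℝ)) * ∫⁻ z in ball x t, (‖f z‖₊ : ℝ≥0∞) with hS
  have hf₁m : AEMeasurable (fun z => ((‖f₁ z‖₊ : ℝ≥0∞))) volume :=
    (hf.aestronglyMeasurable.indicator measurableSet_ball).enorm
  -- pointwise estimate
  have hpt : ∀ y ∈ ball x r, fracMaximal n α f y ≤ fracMaximal n α f₁ y + K * S := by
    intro y hy
    have hyx : dist y x < r := mem_ball.1 hy
    rw [show fracMaximal n α f y = ⨆ (t : ℝ) (_ : 0 < t),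
        volume (ball y t) ^ (α / (n : ℝ) - 1) * ∫⁻ z in ball y t, (‖f z‖₊ : ℝ≥0∞) from rfl]
    refine iSup₂_le fun t ht => ?_
    have hsplit : ∫⁻ z in ball y t, (‖f z‖₊ : ℝ≥0∞)
        = (∫⁻ z in ball y t, (‖f₁ z‖₊ : ℝ≥0∞)) + ∫⁻ z in ball y t, (‖f₂ z‖₊ : ℝ≥0∞) := by
      rw [← lintegral_add_left' hf₁m.restrict]
      refine lintegral_congr fun z => ?_
      by_cases hz : z ∈ B2
      · simp [hf₁, hf₂, Set.indicator_of_mem hz,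
          Set.indicator_of_notMem (Set.notMem_compl_iff.2 hz)]
      · simp [hf₁, hf₂, Set.indicator_of_notMem hz, Set.indicator_of_mem (Set.mem_compl hz)]
    rw [hsplit, mul_add, ← he]
    refine add_le_add ?_ ?_
    · exact le_iSup₂_of_le t ht (by rw [← he])
    · rcases le_or_gt t r with htr | htr
      · have hzero : ∫⁻ z in ball y t, (‖f₂ z‖₊ : ℝ≥0∞) = 0 := by
          have : ∀ᵐ z ∂volume, z ∈ ball y t → ((‖f₂ z‖₊ : ℝ≥0∞)) = (fun _ => (0:ℝ≥0∞)) z := by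
            refine ae_of_all _ fun z hz => ?_
            have hzB : z ∈ B2 := by
              rw [hB2, mem_ball]
              calc dist z x ≤ dist z y + dist y x := dist_triangle _ _ _
                _ < t + r := add_lt_add (mem_ball.1 hz) hyx
                _ ≤ 2 * r := by linarith
            simp [hf₂, Set.indicator_of_notMem (Set.notMem_compl_iff.2 hzB)]
          rw [setLIntegral_congr_fun_ae measurableSet_ball this, lintegral_zero]
        rw [hzero, mul_zero]
        exact zero_le
      · have ht0 : (0 : ℝ) < t := hr.trans htr
        have hsub : ball y t ⊆ ball x (2 * t) := fun z hz => by
          rw [mem_ball]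
          calc dist z x ≤ dist z y + dist y x := dist_triangle _ _ _
            _ < t + r := add_lt_add (mem_ball.1 hz) hyx
            _ ≤ 2 * t := by linarith
        have hint : ∫⁻ z in ball y t, (‖f₂ z‖₊ : ℝ≥0∞)
            ≤ ∫⁻ z in ball x (2 * t), (‖f z‖₊ : ℝ≥0∞) := by
          refine lintegral_mono' (Measure.restrict_mono hsub le_rfl) fun z => ?_
          by_cases hz : z ∈ B2
          · simp [hf₂, Set.indicator_of_notMem (Set.notMem_compl_iff.2 hz)]
          · simp [hf₂, Set.indicator_of_mem (Set.mem_compl hz)]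
        have hvolyt : volume (ball y t) ^ e = ENNReal.ofReal t ^ (α - (n : ℝ)) * V ^ e := by
          rw [Measure.addHaar_ball_of_pos volume y ht0]
          rw [show Module.finrank ℝ (En n) = n from finrank_euclideanSpace_fin]
          rw [ENNReal.ofReal_pow ht0.le, ← ENNReal.rpow_natCast (ENNReal.ofReal t) n,
            ENNReal.mul_rpow_of_ne_top
              (ENNReal.rpow_ne_top_of_nonneg (Nat.cast_nonneg n) ENNReal.ofReal_ne_top) hVt,
            ← ENNReal.rpow_mul]
          congr 2
          rw [he]
          field_simp
        have h2t : ENNReal.ofReal (2 * t) = 2 * ENNReal.ofReal t := by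
          rw [ENNReal.ofReal_mul (by norm_num : (0:ℝ) ≤ 2)]
          norm_num
        have hconst : ENNReal.ofReal t ^ (α - (n : ℝ)) * V ^ e
            = K * ENNReal.ofReal (2 * t) ^ (α - (n : ℝ)) := by
          rw [h2t, ENNReal.mul_rpow_of_ne_top ENNReal.ofNat_ne_top ENNReal.ofReal_ne_top, hK]
          have h22 : (2 : ℝ≥0∞) ^ ((n : ℝ) - α) * 2 ^ (α - (n : ℝ)) = 1 := by
            rw [← ENNReal.rpow_add _ _ two_ne_zero ENNReal.ofNat_ne_top]
            norm_num
          calc ENNReal.ofReal t ^ (α - (n : ℝ)) * V ^ e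
              = V ^ e * ((2 : ℝ≥0∞) ^ ((n : ℝ) - α) * 2 ^ (α - (n : ℝ)))
                * ENNReal.ofReal t ^ (α - (n : ℝ)) := by rw [h22]; ring
            _ = V ^ e * 2 ^ ((n : ℝ) - α) * (2 ^ (α - (n : ℝ))
                * ENNReal.ofReal t ^ (α - (n : ℝ))) := by ring
        calc volume (ball y t) ^ e * ∫⁻ z in ball y t, (‖f₂ z‖₊ : ℝ≥0∞)
            ≤ (ENNReal.ofReal t ^ (α - (n : ℝ)) * V ^ e)
              * ∫⁻ z in ball x (2 * t), (‖f z‖₊ : ℝ≥0∞) := by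
              rw [hvolyt]; exact mul_le_mul_right hint _
          _ = K * (ENNReal.ofReal (2 * t) ^ (α - (n : ℝ))
              * ∫⁻ z in ball x (2 * t), (‖f z‖₊ : ℝ≥0∞)) := by rw [hconst, mul_assoc]
          _ ≤ K * S := by
              refine mul_le_mul_right ?_ _
              exact le_iSup₂_of_le (2 * t) (by linarith) le_rfl
  -- norm chain
  set ρ := ENNReal.ofReal r ^ (-(n : ℝ)) with hρ
  set J := Ψ.inv ρ with hJ
  have hr0' : ENNReal.ofReal r ≠ 0 := by
    simp [ENNReal.ofReal_eq_zero, not_le, hr]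
  have hvol : volume (ball x r) = ENNReal.ofReal r ^ (n : ℝ) * V := by
    rw [Measure.addHaar_ball_of_pos volume x hr,
      show Module.finrank ℝ (En n) = n from finrank_euclideanSpace_fin,
      ENNReal.ofReal_pow hr.le, ← ENNReal.rpow_natCast]
  have hvolinv : (volume (ball x r))⁻¹ = ρ * V⁻¹ := by
    rw [hvol, ENNReal.mul_inv
      (Or.inl (ENNReal.rpow_pos (pos_iff_ne_zero.2 hr0') ENNReal.ofReal_ne_top).ne')
      (Or.inr hV0), ← ENNReal.rpow_neg]
  have hJI : J ≤ (D : ℝ≥0∞) * Ψ.inv ((volume (ball x r))⁻¹) := by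
    rw [hvolinv]
    have hρle : ρ ≤ (D : ℝ≥0∞) * (ρ * V⁻¹) := by
      calc ρ = V * V⁻¹ * ρ := by rw [ENNReal.mul_inv_cancel hV0 hVt, one_mul]
        _ ≤ (D : ℝ≥0∞) * V⁻¹ * ρ := by
            gcongr
            rw [← ENNReal.coe_toNNReal hVt]
            exact_mod_cast le_max_left V.toNNReal 1
        _ = (D : ℝ≥0∞) * (ρ * V⁻¹) := by ring
    exact le_trans (Ψ.inv_mono hρle) (Ψ.inv_scale hD1 _)
  have hIinv : (Ψ.inv ((volume (ball x r))⁻¹))⁻¹ ≤ (D : ℝ≥0∞) * J⁻¹ := by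
    calc (Ψ.inv ((volume (ball x r))⁻¹))⁻¹
        = (D : ℝ≥0∞) * ((D : ℝ≥0∞)⁻¹ * (Ψ.inv ((volume (ball x r))⁻¹))⁻¹) := by
          rw [← mul_assoc, ENNReal.mul_inv_cancel hD0' ENNReal.coe_ne_top, one_mul]
      _ = (D : ℝ≥0∞) * ((D : ℝ≥0∞) * Ψ.inv ((volume (ball x r))⁻¹))⁻¹ := by
          rw [ENNReal.mul_inv (Or.inl hD0') (Or.inl ENNReal.coe_ne_top)]
      _ ≤ (D : ℝ≥0∞) * J⁻¹ := mul_le_mul_right (ENNReal.inv_le_inv.2 hJI) _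
  have hball0 : volume (ball x r) ≠ 0 := (measure_ball_pos _ _ hr).ne'
  have hballt : volume (ball x r) ≠ ⊤ := measure_ball_lt_top.ne
  have hluxeq : luxNorm Φ volume Set.univ f₁ = luxNorm Φ volume B2 f :=
    luxNorm_indicator Φ volume measurableSet_ball f
  have hC1 : 2 * ENNReal.ofReal A ≤ ENNReal.ofReal C := by
    rw [show (2 : ℝ≥0∞) * ENNReal.ofReal A = ENNReal.ofReal (2 * A) by
      rw [ENNReal.ofReal_mul (by norm_num : (0:ℝ) ≤ 2)]; norm_num]
    apply ENNReal.ofReal_le_ofReal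
    have := ENNReal.toReal_nonneg (a := 2 * (K * (D : ℝ≥0∞)))
    rw [hC]; linarith
  have hC2 : 2 * (K * (D : ℝ≥0∞)) ≤ ENNReal.ofReal C := by
    rw [← ENNReal.ofReal_toReal hKDt]
    apply ENNReal.ofReal_le_ofReal
    rw [hC]; linarith
  calc wLuxNormE Ψ volume (ball x r) (fracMaximal n α f)
      ≤ wLuxNormE Ψ volume (ball x r) (fun y => fracMaximal n α f₁ y + K * S) :=
        wLuxNormE_mono_fun Ψ volume hpt
    _ ≤ 2 * wLuxNormE Ψ volume (ball x r) (fracMaximal n α f₁)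
        + 2 * wLuxNormE Ψ volume (ball x r) (fun _ => K * S) :=
        wLuxNormE_add_le Ψ volume (ball x r) (fracMaximal n α f₁) (fun _ => K * S)
    _ ≤ 2 * wLuxNormE Ψ volume Set.univ (fracMaximal n α f₁)
        + 2 * ((K * S) * (Ψ.inv ((volume (ball x r))⁻¹))⁻¹) := by
        gcongr
        · exact wLuxNormE_mono_set Ψ volume (Set.subset_univ _) _
        · exact wLuxNormE_const_le Ψ volume (ball x r) hball0 hballt (K * S)
    _ ≤ 2 * (ENNReal.ofReal A * luxNorm Φ volume Set.univ f₁)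
        + 2 * ((K * S) * ((D : ℝ≥0∞) * J⁻¹)) := by
        gcongr
        · exact hbdd f₁
    _ = (2 * ENNReal.ofReal A) * luxNorm Φ volume B2 f
        + (2 * (K * (D : ℝ≥0∞))) * (J⁻¹ * S) := by
        rw [hluxeq]; ring
    _ ≤ ENNReal.ofReal C * luxNorm Φ volume B2 f + ENNReal.ofReal C * (J⁻¹ * S) := by
        gcongr
    _ = ENNReal.ofReal C * (luxNorm Φ volume B2 f + J⁻¹ * S) := (mul_add _ _ _).symm

end
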